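/- If CDC(𝒮) is a generalized 1D-ordered combinatorial disjunctive constraint, then every minimal infeasible set with respect to CDC(𝒮) has cardinality at most 2; equivalently, CDC(𝒮) is pairwise IB-representable. -/
import Mathlib


/-- Every minimal infeasible set of a generalized 1D-ordered CDC has cardinality
at most 2 (hence the CDC is pairwise IB-representable).  Here `S 0, ..., S (d-1)`
is a generalized 1D-ordered family: `S i ∩ S j = ∅` whenever `|i - j| ≥ 2`;
`A` is an infeasible subset of the ground set all of whose proper subsets are
feasible. -/
theorem g1d_minimal_infeasible_card_le_two {α : Type*} [DecidableEq α]
    (d : ℕ) (S : ℕ → Finset α)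
    (hord : ∀ i j, i < d → j < d → i + 2 ≤ j → S i ∩ S j = ∅)
    (A : Finset α) (hA : A ⊆ (Finset.range d).biUnion S)
    (hinf : ¬ ∃ i, i < d ∧ A ⊆ S i)
    (hmin : ∀ B ⊂ A, ∃ i, i < d ∧ B ⊆ S i) :
    A.card ≤ 2 := by
  by_contra hcard
  push_neg at hcard
  obtain ⟨a, b, c, ha, hb, hc, hab, hac, hbc⟩ := Finset.two_lt_card_iff.mp hcard
  have near : ∀ (p q : ℕ) (x : α), p < d → q < d → x ∈ S p → x ∈ S q → p ≤ q + 1 := by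
    intro p q x hp hq hxp hxq
    by_contra h
    have h2 : q + 2 ≤ p := by omega
    have := hord q p hq hp h2
    have : x ∈ S q ∩ S p := Finset.mem_inter.mpr ⟨hxq, hxp⟩
    simp_all
  obtain ⟨i, hi, hAi⟩ := hmin (A.erase a) (Finset.erase_ssubset ha)
  obtain ⟨j, hj, hAj⟩ := hmin (A.erase b) (Finset.erase_ssubset hb)
  obtain ⟨k, hk, hAk⟩ := hmin (A.erase c) (Finset.erase_ssubset hc)
  have hci : c ∈ S i := hAi (Finset.mem_erase.mpr ⟨hac.symm, hc⟩)
  have hcj : c ∈ S j := hAj (Finset.mem_erase.mpr ⟨hbc.symm, hc⟩)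
  have hbi : b ∈ S i := hAi (Finset.mem_erase.mpr ⟨hab.symm, hb⟩)
  have hbk : b ∈ S k := hAk (Finset.mem_erase.mpr ⟨hbc, hb⟩)
  have haj : a ∈ S j := hAj (Finset.mem_erase.mpr ⟨hab, ha⟩)
  have hak : a ∈ S k := hAk (Finset.mem_erase.mpr ⟨hac, ha⟩)
  have h1 := near i j c hi hj hci hcj
  have h2 := near j i c hj hi hcj hci
  have h3 := near i k b hi hk hbi hbk
  have h4 := near k i b hk hi hbk hbi
  have h5 := near j k a hj hk haj hak
  have h6 := near k j a hk hj hak haj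
  -- two of i, j, k must be equal
  have key : ∀ (p : ℕ) (x y : α), p < d → x ≠ y → A.erase x ⊆ S p → A.erase y ⊆ S p → False := by
    intro p x y hp hxy hx hy
    refine hinf ⟨p, hp, ?_⟩
    intro z hz
    by_cases hzx : z = x
    · exact hy (Finset.mem_erase.mpr ⟨hzx ▸ hxy, hz⟩)
    · exact hx (Finset.mem_erase.mpr ⟨hzx, hz⟩)
  by_cases hij : i = j
  · exact key i a b hi hab hAi (hij ▸ hAj)
  · by_cases hik : i = k
    · exact key i a c hi hac hAi (hik ▸ hAk)
    · by_cases hjk : j = k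
      · exact key j b c hj hbc hAj (hjk ▸ hAk)
      · omega
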